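/- Let A and M be 2×2 real symmetric positive definite matrices with MA = AM, and let k₀ ≥ 2 be an integer. Let g : ℕ → ℝ² and α : ℕ → ℝ satisfy g_{j+1} = (I − α_j A)g_j for all j, with α_j = ⟨g_{j-1}, M g_{j-1}⟩/⟨g_{j-1}, M A g_{j-1}⟩ for every j with 1 ≤ j ≤ k₀+2 and j ≠ k₀ (α₀ arbitrary). Suppose g_j ≠ 0 for all 0 ≤ j ≤ k₀+2, and let q ∈ ℝ², q ≠ 0, satisfy (I − α_{k₀-2} A)q = g_{k₀-2}. Define H₁₁ = ⟨Mq, A(Mq)⟩/‖Mq‖², H₁₂ = ⟨Mq, A g_{k₀}⟩/(‖Mq‖·‖g_{k₀}‖), H₂₂ = ⟨g_{k₀}, A g_{k₀}⟩/‖g_{k₀}‖², and set α_{k₀} = 2/((H₁₁+H₂₂) + √((H₁₁−H₂₂)² + 4H₁₂²)). Then g_{k₀+3} = 0. -/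

import Mathlib

open Matrix

lemma dot_self_pos {u : Fin 2 → ℝ} (hu : u ≠ 0) : 0 < u ⬝ᵥ u := by
  have h0 : 0 ≤ u ⬝ᵥ u := Finset.sum_nonneg fun i _ => mul_self_nonneg _
  rcases h0.lt_or_eq with h | h
  · exact h
  · exact absurd (dotProduct_self_eq_zero.mp h.symm) hu

lemma dot_adj {N : Matrix (Fin 2) (Fin 2) ℝ} (h : Nᵀ = N) (x y : Fin 2 → ℝ) :
    x ⬝ᵥ (N *ᵥ y) = (N *ᵥ x) ⬝ᵥ y := by
  rw [dotProduct_mulVec, ← mulVec_transpose, h]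

lemma two_basis {u w x : Fin 2 → ℝ} (hu : u ≠ 0) (hw : w ≠ 0)
    (huw : u ⬝ᵥ w = 0) (hxu : u ⬝ᵥ x = 0) (hxw : w ⬝ᵥ x = 0) : x = 0 := by
  have hu' := dot_self_pos hu
  have hw' := dot_self_pos hw
  simp only [dotProduct, Fin.sum_univ_two] at hu' hw' huw hxu hxw
  have hd : (u 0 * w 1 - u 1 * w 0) ^ 2 > 0 := by nlinarith [sq_nonneg (u 0 * w 0 + u 1 * w 1)]
  have hd' : u 0 * w 1 - u 1 * w 0 ≠ 0 := by
    intro h; rw [h] at hd; simp at hd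
  funext i
  fin_cases i
  · show x 0 = 0
    have : (u 0 * w 1 - u 1 * w 0) * x 0 = 0 := by linear_combination w 1 * hxu - u 1 * hxw
    exact (mul_eq_zero.mp this).resolve_left hd'
  · show x 1 = 0
    have : (u 0 * w 1 - u 1 * w 0) * x 1 = 0 := by linear_combination u 0 * hxw - w 0 * hxu
    exact (mul_eq_zero.mp this).resolve_left hd'

lemma pd_entry00 {P : Matrix (Fin 2) (Fin 2) ℝ} (hP : P.PosDef) : 0 < P 0 0 := by
  have := hP.dotProduct_mulVec_pos (x := (![1,0] : Fin 2 → ℝ)) (by intro h; simpa using congr_fun h 0)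
  simpa [dotProduct, mulVec, Fin.sum_univ_two] using this

lemma pd_entry11 {P : Matrix (Fin 2) (Fin 2) ℝ} (hP : P.PosDef) : 0 < P 1 1 := by
  have := hP.dotProduct_mulVec_pos (x := (![0,1] : Fin 2 → ℝ)) (by intro h; simpa using congr_fun h 1)
  simpa [dotProduct, mulVec, Fin.sum_univ_two] using this

lemma pd_symm {P : Matrix (Fin 2) (Fin 2) ℝ} (hP : P.PosDef) : Pᵀ = P := by
  have := hP.1
  rwa [Matrix.IsHermitian, conjTranspose_eq_transpose_of_trivial] at this

lemma pd_dot {P : Matrix (Fin 2) (Fin 2) ℝ} (hP : P.PosDef) {x : Fin 2 → ℝ} (hx : x ≠ 0) :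
    0 < x ⬝ᵥ (P *ᵥ x) := by
  have := hP.dotProduct_mulVec_pos hx
  simpa using this

lemma quad_pos {B : Matrix (Fin 2) (Fin 2) ℝ} (hsym : Bᵀ = B)
    (htr : 0 < B.trace) (hdet : 0 < B.det) {x : Fin 2 → ℝ} (hx : x ≠ 0) :
    0 < x ⬝ᵥ (B *ᵥ x) := by
  have hB10 : B 1 0 = B 0 1 := by
    have := congr_fun (congr_fun hsym 1) 0; simpa [Matrix.transpose_apply] using this.symm
  rw [Matrix.trace_fin_two] at htr
  rw [Matrix.det_fin_two, hB10] at hdet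
  have hx' : x 0 ≠ 0 ∨ x 1 ≠ 0 := by
    by_contra h; push_neg at h
    exact hx (funext fun i => by fin_cases i <;> simp [h.1, h.2])
  have h00 : 0 < B 0 0 := by nlinarith [sq_nonneg (B 0 1)]
  simp only [dotProduct, mulVec, Fin.sum_univ_two, hB10]
  rcases eq_or_ne (x 1) 0 with h1 | h1
  · have h0 : x 0 ≠ 0 := hx'.resolve_right (by simp [h1])
    rw [h1]
    nlinarith [mul_self_pos.mpr h0]
  · nlinarith [sq_nonneg (B 0 0 * x 0 + B 0 1 * x 1), mul_pos hdet (mul_self_pos.mpr h1)]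

lemma traceMA_pos {A M : Matrix (Fin 2) (Fin 2) ℝ} (hA : A.PosDef) (hM : M.PosDef) :
    0 < (M * A).trace := by
  have ha00 := pd_entry00 hA; have ha11 := pd_entry11 hA
  have hm00 := pd_entry00 hM; have hm11 := pd_entry11 hM
  have hdA := hA.det_pos; have hdM := hM.det_pos
  rw [Matrix.det_fin_two] at hdA hdM
  have hA10 : A 1 0 = A 0 1 := by
    have := congr_fun (congr_fun (pd_symm hA) 1) 0; simpa using this.symm
  have hM10 : M 1 0 = M 0 1 := by
    have := congr_fun (congr_fun (pd_symm hM) 1) 0; simpa using this.symm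
  rw [hA10] at hdA
  rw [hM10] at hdM
  have k1 : 0 ≤ M 0 1 ^ 2 * (A 0 0 * A 1 1 - A 0 1 * A 0 1) :=
    mul_nonneg (sq_nonneg _) (by nlinarith)
  have k2 : 0 < (M 0 0 * M 1 1 - M 0 1 * M 0 1) * (A 0 0 * A 1 1) := by
    have := mul_pos ha00 ha11; nlinarith
  have k3 : 0 ≤ (M 0 0 * A 0 0 - M 1 1 * A 1 1) ^ 2 := sq_nonneg _
  have htpos : 0 < M 0 0 * A 0 0 + M 1 1 * A 1 1 :=
    add_pos (mul_pos hm00 ha00) (mul_pos hm11 ha11)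
  rw [Matrix.trace_fin_two]
  simp only [Matrix.mul_apply, Fin.sum_univ_two, hA10, hM10]
  nlinarith [sq_nonneg (M 0 0 * A 0 0 + M 1 1 * A 1 1 + 2 * (M 0 1 * A 0 1))]

lemma MA_dot_pos {A M : Matrix (Fin 2) (Fin 2) ℝ} (hA : A.PosDef) (hM : M.PosDef)
    (hcomm : M * A = A * M) {x : Fin 2 → ℝ} (hx : x ≠ 0) :
    0 < x ⬝ᵥ (M *ᵥ (A *ᵥ x)) := by
  have hsym : (M * A)ᵀ = M * A := by
    rw [Matrix.transpose_mul, pd_symm hA, pd_symm hM, hcomm]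
  have := quad_pos hsym (traceMA_pos hA hM)
    (by rw [Matrix.det_mul]; exact mul_pos hM.det_pos hA.det_pos) hx
  rwa [Matrix.mulVec_mulVec]

/-- moving `I - c•A` across an `N`-weighted dot product, for `N` symmetric commuting with
symmetric `A`. -/
lemma shift_dot {A N : Matrix (Fin 2) (Fin 2) ℝ} (hAt : Aᵀ = A) (_hNt : Nᵀ = N)
    (hNA : N * A = A * N) (c : ℝ) (x y : Fin 2 → ℝ) :
    y ⬝ᵥ (N *ᵥ (x - c • (A *ᵥ x))) = (y - c • (A *ᵥ y)) ⬝ᵥ (N *ᵥ x) := by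
  rw [mulVec_sub, mulVec_smul, dotProduct_sub, sub_dotProduct, dotProduct_smul,
    smul_dotProduct]
  have key : y ⬝ᵥ (N *ᵥ (A *ᵥ x)) = (A *ᵥ y) ⬝ᵥ (N *ᵥ x) := by
    rw [mulVec_mulVec, ← dot_adj hAt y (N *ᵥ x), mulVec_mulVec, hNA]
  rw [key]

set_option maxHeartbeats 1000000 in
/-- Theorem 1 (finite termination on two-dimensional strongly convex quadratics),
instance `r = 1`: inserting the new stepsize (new2) at iteration `k₀` into the
(glstep1) method gives `g_{k₀+3} = 0`. -/
theorem finite_termination {A M : Matrix (Fin 2) (Fin 2) ℝ}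
    (hA : A.PosDef) (hM : M.PosDef) (hcomm : M * A = A * M)
    (k₀ : ℕ) (hk₀ : 2 ≤ k₀)
    (g : ℕ → Fin 2 → ℝ) (α : ℕ → ℝ)
    (hrec : ∀ j, g (j + 1) = g j - α j • (A *ᵥ g j))
    (hstep : ∀ j, 1 ≤ j → j ≤ k₀ + 2 → j ≠ k₀ →
      α j = (g (j - 1) ⬝ᵥ (M *ᵥ g (j - 1))) / (g (j - 1) ⬝ᵥ (M *ᵥ (A *ᵥ g (j - 1)))))
    (hgne : ∀ j, j ≤ k₀ + 2 → g j ≠ 0)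
    (q : Fin 2 → ℝ) (hq0 : q ≠ 0)
    (hq : q - α (k₀ - 2) • (A *ᵥ q) = g (k₀ - 2))
    (H₁₁ H₁₂ H₂₂ : ℝ)
    (hH₁₁ : H₁₁ = ((M *ᵥ q) ⬝ᵥ (A *ᵥ (M *ᵥ q))) / ((M *ᵥ q) ⬝ᵥ (M *ᵥ q)))
    (hH₁₂ : H₁₂ = ((M *ᵥ q) ⬝ᵥ (A *ᵥ g k₀)) /
      (Real.sqrt ((M *ᵥ q) ⬝ᵥ (M *ᵥ q)) * Real.sqrt (g k₀ ⬝ᵥ g k₀)))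
    (hH₂₂ : H₂₂ = (g k₀ ⬝ᵥ (A *ᵥ g k₀)) / (g k₀ ⬝ᵥ g k₀))
    (hαk₀ : α k₀ = 2 / ((H₁₁ + H₂₂) + Real.sqrt ((H₁₁ - H₂₂) ^ 2 + 4 * H₁₂ ^ 2))) :
    g (k₀ + 3) = 0 := by
  obtain ⟨k, rfl⟩ : ∃ k, k₀ = k + 2 := ⟨k₀ - 2, by omega⟩
  have hAt := pd_symm hA
  have hMt := pd_symm hM
  have hk2 : k + 2 - 2 = k := by omega
  rw [hk2] at hq
  set u : Fin 2 → ℝ := M *ᵥ q with hu_def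
  set w : Fin 2 → ℝ := g (k + 2) with hw_def
  have hw0 : w ≠ 0 := hgne (k + 2) (by omega)
  have hgk0 : g k ≠ 0 := hgne k (by omega)
  have hu0 : u ≠ 0 := by
    intro h
    have := pd_dot hM hq0
    rw [← hu_def, h, dotProduct_zero] at this
    exact lt_irrefl 0 this
  -- orthogonality of u and w
  have horth : u ⬝ᵥ w = 0 := by
    have e1 : g (k + 1) = g k - α k • (A *ᵥ g k) := hrec k
    have e2 : w = g (k + 1) - α (k + 1) • (A *ᵥ g (k + 1)) := hrec (k + 1)
    have hα1 : α (k + 1) = (g k ⬝ᵥ (M *ᵥ g k)) / (g k ⬝ᵥ (M *ᵥ (A *ᵥ g k))) := by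
      have := hstep (k + 1) (by omega) (by omega) (by omega)
      simpa using this
    have huw : u ⬝ᵥ w = q ⬝ᵥ (M *ᵥ w) := by
      rw [hu_def, dot_adj hMt]
    have hMAt : (M * A)ᵀ = M * A := by
      rw [Matrix.transpose_mul, hAt, hMt, hcomm]
    -- M *ᵥ w expanded
    have hw1 : q ⬝ᵥ (M *ᵥ w) =
        q ⬝ᵥ (M *ᵥ g (k+1)) - α (k+1) * (q ⬝ᵥ ((M * A) *ᵥ g (k+1))) := by
      rw [e2, mulVec_sub, mulVec_smul, dotProduct_sub, dotProduct_smul, smul_eq_mul,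
        mulVec_mulVec]
    have hgk1 : g (k + 1) = g k - α k • (A *ᵥ g k) := e1
    have hqgk : g k = q - α k • (A *ᵥ q) := hq.symm
    have sh1 : q ⬝ᵥ (M *ᵥ g (k+1)) = g k ⬝ᵥ (M *ᵥ g k) := by
      rw [hgk1, hqgk, shift_dot hAt hMt hcomm]
    have sh2 : q ⬝ᵥ ((M * A) *ᵥ g (k+1)) = g k ⬝ᵥ ((M * A) *ᵥ g k) := by
      have hMAA : (M * A) * A = A * (M * A) := by
        nth_rewrite 1 [hcomm]
        rw [mul_assoc]
      rw [hgk1, hqgk, shift_dot hAt hMAt hMAA]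
    have hden : g k ⬝ᵥ ((M * A) *ᵥ g k) ≠ 0 := by
      have := MA_dot_pos hA hM hcomm hgk0
      rw [mulVec_mulVec] at this
      exact this.ne'
    have hα1' : α (k + 1) = (g k ⬝ᵥ (M *ᵥ g k)) / (g k ⬝ᵥ ((M * A) *ᵥ g k)) := by
      rw [hα1, mulVec_mulVec]
    rw [huw, hw1, sh1, sh2, hα1', div_mul_cancel₀ _ hden, sub_self]
  -- scalars
  set a : ℝ := u ⬝ᵥ (A *ᵥ u) with ha_def
  set b : ℝ := u ⬝ᵥ (A *ᵥ w) with hb_def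
  set c : ℝ := w ⬝ᵥ (A *ᵥ w) with hc_def
  set nu : ℝ := u ⬝ᵥ u with hnu_def
  set nw : ℝ := w ⬝ᵥ w with hnw_def
  have hnu : 0 < nu := dot_self_pos hu0
  have hnw : 0 < nw := dot_self_pos hw0
  have hapos : 0 < a := pd_dot hA hu0
  have hcpos : 0 < c := pd_dot hA hw0
  have hwu : w ⬝ᵥ u = 0 := by rw [dotProduct_comm]; exact horth
  have hwAu : w ⬝ᵥ (A *ᵥ u) = b := by
    rw [dot_adj hAt w u, dotProduct_comm]
  -- H values
  have hH11 : H₁₁ = a / nu := hH₁₁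
  have hH22 : H₂₂ = c / nw := hH₂₂
  have hH12sq : H₁₂ ^ 2 = b ^ 2 / (nu * nw) := by
    rw [hH₁₂, div_pow, mul_pow, Real.sq_sqrt hnu.le, Real.sq_sqrt hnw.le]
  -- eigenvalues
  set D : ℝ := Real.sqrt ((H₁₁ - H₂₂) ^ 2 + 4 * H₁₂ ^ 2) with hD_def
  have hDnn : 0 ≤ D := Real.sqrt_nonneg _
  have hD2 : D ^ 2 = (H₁₁ - H₂₂) ^ 2 + 4 * H₁₂ ^ 2 := Real.sq_sqrt (by positivity)
  set lam : ℝ := (H₁₁ + H₂₂ + D) / 2 with hlam_def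
  set mu : ℝ := (H₁₁ + H₂₂ - D) / 2 with hmu_def
  have hlampos : 0 < lam := by
    have h1 : 0 < H₁₁ := by rw [hH11]; positivity
    have h2 : 0 < H₂₂ := by rw [hH22]; positivity
    rw [hlam_def]; linarith
  have hsum : lam + mu = a / nu + c / nw := by
    rw [hlam_def, hmu_def, ← hH11, ← hH22]; ring
  have hprod : lam * mu = (a / nu) * (c / nw) - b ^ 2 / (nu * nw) := by
    have : lam * mu = ((H₁₁ + H₂₂) ^ 2 - D ^ 2) / 4 := by rw [hlam_def, hmu_def]; ring
    rw [this, hD2, ← hH11, ← hH22, ← hH12sq]; ring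
  have hαlam : α (k + 2) = 1 / lam := by
    rw [hαk₀, show H₁₁ + H₂₂ + D = 2 * lam by rw [hlam_def]; ring,
      div_mul_eq_div_div]
    norm_num
  -- expansions of A u and A w in the orthogonal basis {u, w}
  have hAu : A *ᵥ u = (a / nu) • u + (b / nw) • w := by
    have hz : A *ᵥ u - ((a / nu) • u + (b / nw) • w) = 0 := by
      apply two_basis hu0 hw0 horth
      · rw [dotProduct_sub, dotProduct_add, dotProduct_smul, dotProduct_smul, horth,
          ← ha_def, ← hnu_def]
        simp only [smul_eq_mul, mul_zero, add_zero, div_mul_cancel₀ _ hnu.ne', sub_self]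
      · rw [dotProduct_sub, dotProduct_add, dotProduct_smul, dotProduct_smul, hwu, hwAu,
          ← hnw_def]
        simp only [smul_eq_mul, mul_zero, zero_add, div_mul_cancel₀ _ hnw.ne', sub_self]
    have := sub_eq_zero.mp hz
    exact this
  have hAw : A *ᵥ w = (b / nu) • u + (c / nw) • w := by
    have hz : A *ᵥ w - ((b / nu) • u + (c / nw) • w) = 0 := by
      apply two_basis hu0 hw0 horth
      · rw [dotProduct_sub, dotProduct_add, dotProduct_smul, dotProduct_smul, horth,
          ← hb_def, ← hnu_def]
        simp only [smul_eq_mul, mul_zero, add_zero, div_mul_cancel₀ _ hnu.ne', sub_self]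
      · rw [dotProduct_sub, dotProduct_add, dotProduct_smul, dotProduct_smul, hwu,
          ← hc_def, ← hnw_def]
        simp only [smul_eq_mul, mul_zero, zero_add, div_mul_cancel₀ _ hnw.ne', sub_self]
    exact sub_eq_zero.mp hz
  -- Cayley–Hamilton applied to w
  have hCH : A *ᵥ (A *ᵥ w) = (lam + mu) • (A *ᵥ w) - (lam * mu) • w := by
    rw [hAw, mulVec_add, mulVec_smul, mulVec_smul, hAu, hAw, hsum, hprod]
    match_scalars <;> (field_simp; try ring)
  -- eigenvector step
  have h3 : g (k + 3) = w - (1 / lam) • (A *ᵥ w) := by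
    rw [show k + 3 = (k + 2) + 1 from rfl, hrec (k + 2), hαlam, ← hw_def]
  have heig3 : A *ᵥ g (k + 3) = mu • g (k + 3) := by
    rw [h3, mulVec_sub, mulVec_smul, hCH]
    match_scalars <;> (field_simp; try ring)
  have hg3 : g (k + 3) ≠ 0 := hgne (k + 3) (by omega)
  have hmupos : 0 < mu := by
    have h1 : 0 < g (k+3) ⬝ᵥ (A *ᵥ g (k+3)) := pd_dot hA hg3
    rw [heig3, dotProduct_smul] at h1
    have h2 : 0 < g (k+3) ⬝ᵥ g (k+3) := dot_self_pos hg3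
    rw [smul_eq_mul] at h1
    nlinarith
  have h4 : g (k + 4) = (1 - α (k + 3) * mu) • g (k + 3) := by
    rw [show k + 4 = (k + 3) + 1 from rfl, hrec (k + 3), heig3, smul_smul, sub_smul, one_smul]
  have heig4 : A *ᵥ g (k + 4) = mu • g (k + 4) := by
    rw [h4, mulVec_smul, heig3, smul_smul, smul_smul, mul_comm]
  have hα4 : α (k + 4) = 1 / mu := by
    have := hstep (k + 4) (by omega) (by omega) (by omega)
    rw [show k + 4 - 1 = k + 3 from rfl] at this
    rw [this, heig3, mulVec_smul, dotProduct_smul]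
    have hX : 0 < g (k+3) ⬝ᵥ (M *ᵥ g (k+3)) := pd_dot hM hg3
    rw [smul_eq_mul, div_mul_eq_div_div_swap, div_self hX.ne']
  show g (k + 5) = 0
  rw [show k + 5 = (k + 4) + 1 from rfl, hrec (k + 4), heig4, hα4, smul_smul]
  rw [show 1 / mu * mu = 1 by field_simp]
  rw [one_smul, sub_self]
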